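/- Let G_b(x) = 1/cosh²(2x) and suppose R > 0 is a C^1 function on [0,∞)×ℝ with (1/d) ≤ R_b/R ≤ d for a constant d, where R_b = R_0 e^{2t} cosh(2x), and ‖(R−R_b)(t,·)‖_∞ ≤ (t+1)m, ‖(R_x−∂_x R_b)(t,·)‖_∞ ≤ m, ‖(R_t−∂_t R_b)(t,·)‖_∞ ≤ m for all t ≥ 0. Then there is a constant C (depending only on d and R_0) such that for all t ≥ 0 and x ∈ ℝ: |R_t/R − ∂_t R_b/R_b| ≤ C(t+1)m/(e^{2t}cosh 2x), |R_x/R − ∂_x R_b/R_b| ≤ C(t+1)m/(e^{2t}cosh 2x), and |G − G_b| ≤ C(t+1)m/(e^{2t}cosh 2x), where G = (R_t² − R_x²)/(4R²). -/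

import Mathlib

open Real MeasureTheory Filter

lemma aux_sq (p q : ℝ) : |p^2 - q^2| ≤ (|p| + |q|) * |p - q| := by
  have h : p^2 - q^2 = (p + q) * (p - q) := by ring
  rw [h, abs_mul]
  exact mul_le_mul_of_nonneg_right (abs_add_le p q) (abs_nonneg _)

lemma aux_div (d E mm B Rv Dv Db : ℝ) (hE : 0 ≤ E) (hB : 0 < B)
    (hR : 0 < Rv) (hBR : B ≤ d * Rv) (hDb : |Db| ≤ 2 * B) (hD : |Dv - Db| ≤ mm)
    (h0 : |Rv - B| ≤ E) (hmE : mm ≤ E) : |Dv / Rv - Db / B| ≤ 3 * d * E / B := by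
  have hnum : |Dv * B - Db * Rv| ≤ 3 * E * B := by
    have heq : Dv * B - Db * Rv = (Dv - Db) * B - Db * (Rv - B) := by ring
    rw [heq]
    calc |(Dv - Db) * B - Db * (Rv - B)|
        ≤ |(Dv - Db) * B| + |Db * (Rv - B)| := abs_sub _ _
      _ = |Dv - Db| * B + |Db| * |Rv - B| := by rw [abs_mul, abs_mul, abs_of_pos hB]
      _ ≤ E * B + (2 * B) * E := by
          gcongr
          exact le_trans hD hmE
      _ = 3 * E * B := by ring
  have hRvB : (0:ℝ) < Rv * B := mul_pos hR hB
  have heq2 : Dv / Rv - Db / B = (Dv * B - Db * Rv) / (Rv * B) := by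
    field_simp
  rw [heq2, abs_div, abs_of_pos hRvB, div_le_div_iff₀ hRvB hB]
  have h1 : |Dv * B - Db * Rv| * B ≤ (3 * E * B) * B :=
    mul_le_mul_of_nonneg_right hnum hB.le
  nlinarith [mul_le_mul_of_nonneg_left hBR (by positivity : (0:ℝ) ≤ 3 * E * B)]

lemma aux_abs (d mm R0 B Rv Dv Db : ℝ) (hmm : 0 ≤ mm) (hR0 : 0 < R0)
    (hR0B : R0 ≤ B) (hR : 0 < Rv) (hBR : B ≤ d * Rv) (hDb : |Db| ≤ 2 * B)
    (hD : |Dv - Db| ≤ mm) : |Dv / Rv| ≤ 2 * d + d * mm / R0 := by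
  have hB : 0 < B := lt_of_lt_of_le hR0 hR0B
  have hDv : |Dv| ≤ 2 * B + mm := by
    calc |Dv| = |Db + (Dv - Db)| := by ring_nf
      _ ≤ |Db| + |Dv - Db| := abs_add_le _ _
      _ ≤ 2 * B + mm := by linarith
  rw [abs_div, abs_of_pos hR, div_le_iff₀ hR]
  have key : |Dv| * R0 ≤ ((2 * d + d * mm / R0) * Rv) * R0 := by
    have hc2 : d * mm / R0 * Rv * R0 = d * mm * Rv := by field_simp
    have h1 : 2 * B * R0 ≤ 2 * (d * Rv) * R0 := by nlinarith
    have h2 : mm * R0 ≤ d * mm * Rv := by nlinarith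
    nlinarith [mul_le_mul_of_nonneg_right hDv hR0.le]
  exact le_of_mul_le_mul_right key hR0

lemma aux3 (M e a b ab bb : ℝ) (hM0 : 0 < M) (he : 0 ≤ e)
    (haM : |a| ≤ M) (hbM : |b| ≤ M) (habM : |ab| ≤ M) (hbbM : |bb| ≤ M)
    (e1 : |a - ab| ≤ e) (e2 : |b - bb| ≤ e) :
    |(a^2 - b^2)/4 - (ab^2 - bb^2)/4| ≤ M * e := by
  have hsq1 : |a^2 - ab^2| ≤ (|a| + |ab|) * |a - ab| := aux_sq a ab
  have hsq2 : |b^2 - bb^2| ≤ (|b| + |bb|) * |b - bb| := aux_sq b bb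
  have hmul1 : (|a| + |ab|) * |a - ab| ≤ (2*M) * e :=
    mul_le_mul (by linarith) e1 (abs_nonneg _) (by linarith)
  have hmul2 : (|b| + |bb|) * |b - bb| ≤ (2*M) * e :=
    mul_le_mul (by linarith) e2 (abs_nonneg _) (by linarith)
  have heq : (a^2 - b^2)/4 - (ab^2 - bb^2)/4 = ((a^2 - ab^2) - (b^2 - bb^2))/4 := by ring
  rw [heq, abs_div, abs_of_pos (by norm_num : (0:ℝ) < 4)]
  have htr : |(a^2 - ab^2) - (b^2 - bb^2)| ≤ |a^2 - ab^2| + |b^2 - bb^2| := abs_sub _ _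
  linarith

lemma aux_gb (c s : ℝ) (hcp : 0 < c) (hsq : c^2 - s^2 = 1) :
    1 / c^2 = ((2:ℝ)^2 - (2*s/c)^2)/4 := by
  field_simp
  ring_nf
  nlinarith [hsq]

noncomputable def pt (u : ℝ → ℝ → ℝ) : ℝ → ℝ → ℝ := fun t x => deriv (fun s => u s x) t
noncomputable def px (u : ℝ → ℝ → ℝ) : ℝ → ℝ → ℝ := fun t x => deriv (fun y => u t y) x

set_option maxHeartbeats 1000000 in
/-- coefficient estimates for $R_t/R$, $R_x/R$ and $G$. -/
theorem statement8 (R₀ m d : ℝ) (hR₀ : 0 < R₀) (hm : 0 ≤ m) (hd : 1 ≤ d)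
    (R Rb : ℝ → ℝ → ℝ)
    (hRb : Rb = fun t x => R₀ * Real.exp (2 * t) * Real.cosh (2 * x))
    (hsmooth : ContDiff ℝ 1 (fun p : ℝ × ℝ => R p.1 p.2))
    (hRpos : ∀ t x, 0 ≤ t → 0 < R t x)
    (hcomp : ∀ t x, 0 ≤ t → 1 / d ≤ Rb t x / R t x ∧ Rb t x / R t x ≤ d)
    (h0 : ∀ t x, 0 ≤ t → |R t x - Rb t x| ≤ (t + 1) * m)
    (hx : ∀ t x, 0 ≤ t → |px R t x - px Rb t x| ≤ m)
    (ht : ∀ t x, 0 ≤ t → |pt R t x - pt Rb t x| ≤ m) :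
    ∃ C : ℝ, 0 < C ∧ ∀ t x, 0 ≤ t →
      |pt R t x / R t x - pt Rb t x / Rb t x|
          ≤ C * (t + 1) * m / (Real.exp (2 * t) * Real.cosh (2 * x)) ∧
      |px R t x / R t x - px Rb t x / Rb t x|
          ≤ C * (t + 1) * m / (Real.exp (2 * t) * Real.cosh (2 * x)) ∧
      |((pt R t x) ^ 2 - (px R t x) ^ 2) / (4 * (R t x) ^ 2) - 1 / (Real.cosh (2 * x)) ^ 2|
          ≤ C * (t + 1) * m / (Real.exp (2 * t) * Real.cosh (2 * x)) := by
  have hd0 : (0:ℝ) < d := by linarith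
  have hMm : (0:ℝ) ≤ d * m / R₀ := by positivity
  have hM2 : 2 ≤ 2 * d + d * m / R₀ := by linarith
  have hM0 : (0:ℝ) < 2 * d + d * m / R₀ := by linarith
  refine ⟨3 * d * (2 * d + d * m / R₀) / R₀, by positivity, ?_⟩
  intro t x h0t
  have hcoshpos : 0 < Real.cosh (2 * x) := Real.cosh_pos _
  have hexppos : 0 < Real.exp (2 * t) := Real.exp_pos _
  have hBpos : 0 < R₀ * Real.exp (2 * t) * Real.cosh (2 * x) := by positivity
  have hRbv : Rb t x = R₀ * Real.exp (2 * t) * Real.cosh (2 * x) := by rw [hRb]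
  have hR0B : R₀ ≤ R₀ * Real.exp (2 * t) * Real.cosh (2 * x) := by
    have h1 : 1 ≤ Real.exp (2 * t) := Real.one_le_exp (by linarith)
    have h2 : 1 ≤ Real.cosh (2 * x) := Real.one_le_cosh _
    nlinarith [mul_le_mul h1 h2 (by norm_num : (0:ℝ) ≤ 1) (le_trans (by norm_num) h1)]
  have hRp : 0 < R t x := hRpos t x h0t
  have hBR : R₀ * Real.exp (2 * t) * Real.cosh (2 * x) ≤ d * R t x := by
    have h := (hcomp t x h0t).2
    rw [div_le_iff₀ hRp] at h
    rw [← hRbv]; exact h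
  -- derivatives of Rb
  have hPT : pt Rb t x = 2 * (R₀ * Real.exp (2 * t) * Real.cosh (2 * x)) := by
    have h1 : HasDerivAt (fun s : ℝ => 2 * s) 2 t := by
      simpa using (hasDerivAt_id t).const_mul 2
    have h2 : HasDerivAt (fun s : ℝ => R₀ * Real.exp (2 * s) * Real.cosh (2 * x))
        (R₀ * (Real.exp (2 * t) * 2) * Real.cosh (2 * x)) t :=
      (h1.exp.const_mul R₀).mul_const _
    simp only [pt, hRb]
    rw [h2.deriv]; ring
  have hPX : px Rb t x = R₀ * Real.exp (2 * t) * (Real.sinh (2 * x) * 2) := by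
    have h1 : HasDerivAt (fun y : ℝ => 2 * y) 2 x := by
      simpa using (hasDerivAt_id x).const_mul 2
    have h2 : HasDerivAt (fun y : ℝ => R₀ * Real.exp (2 * t) * Real.cosh (2 * y))
        (R₀ * Real.exp (2 * t) * (Real.sinh (2 * x) * 2)) x := h1.cosh.const_mul _
    simp only [px, hRb]
    rw [h2.deriv]
  have hsinh : |Real.sinh (2 * x)| ≤ Real.cosh (2 * x) := by
    nlinarith [Real.cosh_sq (2 * x), sq_abs (Real.sinh (2 * x)), abs_nonneg (Real.sinh (2 * x))]
  have hDbT : |pt Rb t x| ≤ 2 * (R₀ * Real.exp (2 * t) * Real.cosh (2 * x)) := by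
    rw [hPT, abs_of_pos (by positivity : (0:ℝ) < 2 * (R₀ * Real.exp (2 * t) * Real.cosh (2 * x)))]
  have hDbX : |px Rb t x| ≤ 2 * (R₀ * Real.exp (2 * t) * Real.cosh (2 * x)) := by
    rw [hPX, abs_mul, abs_mul, abs_of_pos hR₀, abs_of_pos hexppos, abs_mul, abs_two]
    nlinarith [mul_pos hR₀ hexppos, hsinh, abs_nonneg (Real.sinh (2 * x))]
  have hE : 0 ≤ (t + 1) * m := mul_nonneg (by linarith) hm
  have hmE : m ≤ (t + 1) * m := by nlinarith
  have h0' : |R t x - R₀ * Real.exp (2 * t) * Real.cosh (2 * x)| ≤ (t + 1) * m := by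
    rw [← hRbv]; exact h0 t x h0t
  have e1 : |pt R t x / R t x - pt Rb t x / (R₀ * Real.exp (2 * t) * Real.cosh (2 * x))|
      ≤ 3 * d * ((t + 1) * m) / (R₀ * Real.exp (2 * t) * Real.cosh (2 * x)) :=
    aux_div d ((t + 1) * m) m _ _ _ _ hE hBpos hRp hBR hDbT (ht t x h0t) h0' hmE
  have e2 : |px R t x / R t x - px Rb t x / (R₀ * Real.exp (2 * t) * Real.cosh (2 * x))|
      ≤ 3 * d * ((t + 1) * m) / (R₀ * Real.exp (2 * t) * Real.cosh (2 * x)) :=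
    aux_div d ((t + 1) * m) m _ _ _ _ hE hBpos hRp hBR hDbX (hx t x h0t) h0' hmE
  have hRHS : 3 * d * (2 * d + d * m / R₀) / R₀ * (t + 1) * m / (Real.exp (2 * t) * Real.cosh (2 * x))
      = (2 * d + d * m / R₀) * (3 * d * ((t + 1) * m) / (R₀ * Real.exp (2 * t) * Real.cosh (2 * x))) := by
    field_simp
  have hbound : 3 * d * ((t + 1) * m) / (R₀ * Real.exp (2 * t) * Real.cosh (2 * x))
      ≤ (2 * d + d * m / R₀) * (3 * d * ((t + 1) * m) / (R₀ * Real.exp (2 * t) * Real.cosh (2 * x))) := by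
    have he : 0 ≤ 3 * d * ((t + 1) * m) / (R₀ * Real.exp (2 * t) * Real.cosh (2 * x)) := by positivity
    nlinarith
  refine ⟨?_, ?_, ?_⟩
  · rw [hRbv, hRHS]; exact le_trans e1 hbound
  · rw [hRbv, hRHS]; exact le_trans e2 hbound
  · rw [hRHS]
    have hG : ((pt R t x) ^ 2 - (px R t x) ^ 2) / (4 * (R t x) ^ 2)
        = ((pt R t x / R t x) ^ 2 - (px R t x / R t x) ^ 2) / 4 := by
      field_simp
      try exact Or.inl (by ring)
      try ring
    have hGb : 1 / (Real.cosh (2 * x)) ^ 2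
        = ((pt Rb t x / (R₀ * Real.exp (2 * t) * Real.cosh (2 * x))) ^ 2
          - (px Rb t x / (R₀ * Real.exp (2 * t) * Real.cosh (2 * x))) ^ 2) / 4 := by
      have q1 : 2 * (R₀ * Real.exp (2 * t) * Real.cosh (2 * x)) / (R₀ * Real.exp (2 * t) * Real.cosh (2 * x)) = 2 := by
        rw [mul_div_assoc, div_self hBpos.ne', mul_one]
      have q2 : R₀ * Real.exp (2 * t) * (Real.sinh (2 * x) * 2) / (R₀ * Real.exp (2 * t) * Real.cosh (2 * x))
          = 2 * Real.sinh (2 * x) / Real.cosh (2 * x) := by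
        rw [div_eq_div_iff (by positivity) hcoshpos.ne']
        ring
      rw [hPT, hPX, q1, q2]
      have hc : Real.cosh (2 * x) ^ 2 - Real.sinh (2 * x) ^ 2 = 1 := by
        rw [Real.cosh_sq]; ring
      exact aux_gb _ _ hcoshpos hc
    rw [hG, hGb]
    have haM : |pt R t x / R t x| ≤ 2 * d + d * m / R₀ :=
      aux_abs d m R₀ _ _ _ _ hm hR₀ hR0B hRp hBR hDbT (ht t x h0t)
    have hbM : |px R t x / R t x| ≤ 2 * d + d * m / R₀ :=
      aux_abs d m R₀ _ _ _ _ hm hR₀ hR0B hRp hBR hDbX (hx t x h0t)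
    have habM : |pt Rb t x / (R₀ * Real.exp (2 * t) * Real.cosh (2 * x))| ≤ 2 * d + d * m / R₀ := by
      rw [hPT, mul_div_assoc, div_self hBpos.ne', mul_one, abs_two]
      exact hM2
    have hbbM : |px Rb t x / (R₀ * Real.exp (2 * t) * Real.cosh (2 * x))| ≤ 2 * d + d * m / R₀ := by
      rw [abs_div, abs_of_pos hBpos, div_le_iff₀ hBpos]
      calc |px Rb t x| ≤ 2 * (R₀ * Real.exp (2 * t) * Real.cosh (2 * x)) := hDbX
        _ ≤ (2 * d + d * m / R₀) * (R₀ * Real.exp (2 * t) * Real.cosh (2 * x)) :=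
            mul_le_mul_of_nonneg_right hM2 hBpos.le
    have key := aux3 (2 * d + d * m / R₀)
      (3 * d * ((t + 1) * m) / (R₀ * Real.exp (2 * t) * Real.cosh (2 * x)))
      (pt R t x / R t x) (px R t x / R t x)
      (pt Rb t x / (R₀ * Real.exp (2 * t) * Real.cosh (2 * x)))
      (px Rb t x / (R₀ * Real.exp (2 * t) * Real.cosh (2 * x)))
      hM0 (by positivity) haM hbM habM hbbM e1 e2
    exact key
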